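/- If a formal power series p(x) with p(0) = 0 satisfies p(x) = x·exp(p(x)), then its coefficients are given by [x^n] p(x) = n^{n-1}/n! for all n ≥ 1. -/

import Mathlib

open Nat Real Filter

/-- The composition `exp ∘ p` for a power series `p` with zero constant coefficient:
its `n`-th coefficient is `∑_{k ≤ n} [x^n] (p^k) / k!`. -/
noncomputable def expComp (p : PowerSeries ℚ) : PowerSeries ℚ :=
  PowerSeries.mk fun n => ∑ k ∈ Finset.range (n + 1), PowerSeries.coeff n (p ^ k) / k !

lemma coeff_pow_eq_zero' {a : PowerSeries ℚ} (h0 : PowerSeries.constantCoeff a = 0)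
    {n u : ℕ} (h : n < u) : PowerSeries.coeff n (a ^ u) = 0 := by
  have hd : (PowerSeries.X : PowerSeries ℚ) ^ u ∣ a ^ u :=
    pow_dvd_pow_of_dvd (PowerSeries.X_dvd_iff.mpr h0) u
  exact PowerSeries.X_pow_dvd_iff.mp hd n h

lemma coeff_mul_pow_eq_zero' {a b : PowerSeries ℚ} (h0 : PowerSeries.constantCoeff a = 0)
    (h1 : PowerSeries.constantCoeff b = 0) {n u v : ℕ} (h : n < u + v) :
    PowerSeries.coeff n (a ^ u * b ^ v) = 0 := by
  have hd : (PowerSeries.X : PowerSeries ℚ) ^ (u + v) ∣ a ^ u * b ^ v := by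
    rw [pow_add]
    exact mul_dvd_mul (pow_dvd_pow_of_dvd (PowerSeries.X_dvd_iff.mpr h0) u)
      (pow_dvd_pow_of_dvd (PowerSeries.X_dvd_iff.mpr h1) v)
  exact PowerSeries.X_pow_dvd_iff.mp hd n h

lemma expComp_mul (a b : PowerSeries ℚ) (ha : PowerSeries.constantCoeff a = 0)
    (hb : PowerSeries.constantCoeff b = 0) :
    expComp (a + b) = expComp a * expComp b := by
  ext n
  set g : ℕ × ℕ → ℚ := fun uv => PowerSeries.coeff n (a ^ uv.1 * b ^ uv.2) / (uv.1 ! * uv.2 !)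
    with hg
  have hL : PowerSeries.coeff n (expComp (a + b)) =
      ∑ uv ∈ Finset.range (n+1) ×ˢ Finset.range (n+1), g uv := by
    simp only [expComp, PowerSeries.coeff_mk]
    have step1 : ∀ m ∈ Finset.range (n+1),
        PowerSeries.coeff n ((a + b) ^ m) / m ! =
        ∑ p ∈ Finset.HasAntidiagonal.antidiagonal m, g p := by
      intro m _
      rw [Finset.Nat.sum_antidiagonal_eq_sum_range_succ_mk]
      rw [add_pow, map_sum, Finset.sum_div]
      refine Finset.sum_congr rfl fun u hu => ?_
      rw [← map_natCast (PowerSeries.C (R := ℚ)) (m.choose u), PowerSeries.coeff_mul_C, hg]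
      have hum : u ≤ m := Nat.lt_succ_iff.mp (Finset.mem_range.mp hu)
      rw [Nat.cast_choose ℚ hum]
      have h1 : (m ! : ℚ) ≠ 0 := Nat.cast_ne_zero.mpr (Nat.factorial_ne_zero m)
      have h2 : (u ! : ℚ) ≠ 0 := Nat.cast_ne_zero.mpr (Nat.factorial_ne_zero u)
      have h3 : ((m - u)! : ℚ) ≠ 0 := Nat.cast_ne_zero.mpr (Nat.factorial_ne_zero _)
      field_simp
    rw [Finset.sum_congr rfl step1]
    have step2 : ∀ m ∈ Finset.range (n+1),
        ∑ p ∈ Finset.HasAntidiagonal.antidiagonal m, g p =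
        ∑ p ∈ Finset.range (n+1) ×ˢ Finset.range (n+1), if p.1 + p.2 = m then g p else 0 := by
      intro m hm
      rw [← Finset.sum_filter]
      refine (Finset.sum_congr ?_ fun _ _ => rfl)
      ext p
      simp only [Finset.mem_filter, Finset.mem_product, Finset.mem_range, Finset.HasAntidiagonal.mem_antidiagonal]
      have hmn : m ≤ n := Nat.lt_succ_iff.mp (Finset.mem_range.mp hm)
      omega
    rw [Finset.sum_congr rfl step2, Finset.sum_comm]
    refine Finset.sum_congr rfl fun p hp => ?_
    rw [Finset.sum_ite_eq (Finset.range (n+1)) (p.1 + p.2)]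
    by_cases hle : p.1 + p.2 ≤ n
    · rw [if_pos (Finset.mem_range.mpr (Nat.lt_succ_of_le hle))]
    · have : g p = 0 := by
        rw [hg]; simp only
        rw [coeff_mul_pow_eq_zero' ha hb (by omega), zero_div]
      rw [this, if_neg, ] <;> simp [Finset.mem_range]; omega
  have hR : PowerSeries.coeff n (expComp a * expComp b) =
      ∑ uv ∈ Finset.range (n+1) ×ˢ Finset.range (n+1), g uv := by
    rw [PowerSeries.coeff_mul]
    simp only [expComp, PowerSeries.coeff_mk]
    have step1 : ∀ p ∈ Finset.HasAntidiagonal.antidiagonal n,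
        (∑ u ∈ Finset.range (p.1+1), PowerSeries.coeff p.1 (a^u)/u !) *
        (∑ v ∈ Finset.range (p.2+1), PowerSeries.coeff p.2 (b^v)/v !) =
        ∑ uv ∈ Finset.range (n+1) ×ˢ Finset.range (n+1),
          (PowerSeries.coeff p.1 (a^uv.1) * PowerSeries.coeff p.2 (b^uv.2)) / (uv.1 ! * uv.2 !) := by
      intro p hp
      have hp1 : p.1 ≤ n := by
        have := Finset.HasAntidiagonal.mem_antidiagonal.mp hp; omega
      have hp2 : p.2 ≤ n := by
        have := Finset.HasAntidiagonal.mem_antidiagonal.mp hp; omega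
      have e1 : ∑ u ∈ Finset.range (p.1+1), PowerSeries.coeff p.1 (a^u)/u ! =
          ∑ u ∈ Finset.range (n+1), PowerSeries.coeff p.1 (a^u)/u ! := by
        refine Finset.sum_subset ?_ ?_
        · exact Finset.range_subset_range.mpr (by omega)
        · intro u _ hu
          rw [coeff_pow_eq_zero' ha (by simp [Finset.mem_range] at hu ⊢; omega), zero_div]
      have e2 : ∑ v ∈ Finset.range (p.2+1), PowerSeries.coeff p.2 (b^v)/v ! =
          ∑ v ∈ Finset.range (n+1), PowerSeries.coeff p.2 (b^v)/v ! := by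
        refine Finset.sum_subset ?_ ?_
        · exact Finset.range_subset_range.mpr (by omega)
        · intro v _ hv
          rw [coeff_pow_eq_zero' hb (by simp [Finset.mem_range] at hv ⊢; omega), zero_div]
      rw [e1, e2, Finset.sum_mul_sum]
      rw [Finset.sum_product]
      refine Finset.sum_congr rfl fun u _ => Finset.sum_congr rfl fun v _ => ?_
      field_simp
    rw [Finset.sum_congr rfl step1, Finset.sum_comm]
    refine Finset.sum_congr rfl fun uv _ => ?_
    rw [hg]
    simp only
    rw [← Finset.sum_div, ← PowerSeries.coeff_mul]
  rw [hL, hR]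

lemma expComp_zero : expComp (0 : PowerSeries ℚ) = 1 := by
  ext n
  simp only [expComp, PowerSeries.coeff_mk]
  rw [Finset.sum_eq_single 0]
  · simp
  · intro k _ hk
    rw [zero_pow hk, map_zero, zero_div]
  · intro hx
    exact absurd (Finset.mem_range.mpr (Nat.succ_pos n)) hx

lemma expComp_pow (p : PowerSeries ℚ) (h0 : PowerSeries.constantCoeff p = 0) (k : ℕ) :
    expComp p ^ k = expComp (k • p) := by
  induction k with
  | zero => simp [expComp_zero]
  | succ k ih =>
    rw [pow_succ, ih, ← expComp_mul _ _ (by simp [h0]) h0, succ_nsmul]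

lemma coeff_E_pow (p : PowerSeries ℚ) (h0 : PowerSeries.constantCoeff p = 0) (k m : ℕ) :
    PowerSeries.coeff m (expComp p ^ k) =
    ∑ j ∈ Finset.range (m + 1), (k : ℚ) ^ j * PowerSeries.coeff m (p ^ j) / j ! := by
  rw [expComp_pow p h0 k]
  simp only [expComp, PowerSeries.coeff_mk]
  refine Finset.sum_congr rfl fun j _ => ?_
  rw [smul_pow, map_nsmul, nsmul_eq_mul]
  push_cast
  ring

lemma binom_id (m k : ℕ) (hm : 1 ≤ m) :
    ∑ i ∈ Finset.range m, ((i : ℚ) + 1) * (m.choose (i + 1)) * (k : ℚ) ^ (i + 1) *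
      (m : ℚ) ^ (m - (i + 1)) = (m : ℚ) * k * ((k : ℚ) + (m : ℚ)) ^ (m - 1) := by
  have e1 : ∀ i ∈ Finset.range m,
      ((i : ℚ) + 1) * (m.choose (i + 1)) * (k : ℚ) ^ (i + 1) * (m : ℚ) ^ (m - (i + 1)) =
      (m : ℚ) * ((((m - 1).choose i : ℕ) : ℚ) * ((k : ℚ) ^ i * (m : ℚ) ^ (m - 1 - i)) * k) := by
    intro i hi
    have h1 : m * (m - 1).choose i = m.choose (i + 1) * (i + 1) := by
      have h := Nat.add_one_mul_choose_eq (m - 1) i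
      have hms : m - 1 + 1 = m := by omega
      rw [hms] at h
      simpa [Nat.succ_eq_add_one] using h
    have h2 : ((m : ℚ)) * ((m - 1).choose i : ℚ) = (m.choose (i + 1) : ℚ) * ((i : ℚ) + 1) := by
      exact_mod_cast congrArg (Nat.cast : ℕ → ℚ) h1
    have h3 : m - (i + 1) = m - 1 - i := by omega
    rw [h3, pow_succ]
    linear_combination (-((k : ℚ) ^ i * (m : ℚ) ^ (m - 1 - i) * (k : ℚ))) * h2
  rw [Finset.sum_congr rfl e1, ← Finset.mul_sum, ← Finset.sum_mul]
  have e2 : ∑ i ∈ Finset.range m, (((m - 1).choose i : ℕ) : ℚ) * ((k : ℚ) ^ i * (m : ℚ) ^ (m - 1 - i)) =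
      ((k : ℚ) + (m : ℚ)) ^ (m - 1) := by
    have hap := add_pow (k : ℚ) (m : ℚ) (m - 1)
    rw [show m - 1 + 1 = m by omega] at hap
    rw [hap]
    exact Finset.sum_congr rfl fun i _ => by ring
  rw [e2]
  ring

/-- Lagrange inversion for `φ(w) = e^w`: if `p(0) = 0` and `p = X · exp(p)`, then
`[x^n] p = n^(n-1)/n!` for all `n ≥ 1`. -/
theorem stmt_4 (p : PowerSeries ℚ) (h0 : PowerSeries.constantCoeff p = 0)
    (h : p = PowerSeries.X * expComp p) (n : ℕ) (hn : 1 ≤ n) :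
    PowerSeries.coeff n p = (n : ℚ) ^ (n - 1) / n ! := by
  have key : ∀ n : ℕ, ∀ k : ℕ, 1 ≤ k → k ≤ n →
      (n : ℚ) * PowerSeries.coeff n (p ^ k) = (k : ℚ) * (n : ℚ) ^ (n - k) / (n - k)! := by
    intro n
    induction n using Nat.strong_induction_on with
    | _ n IH =>
      intro k hk1 hkn
      set m := n - k with hmdef
      have hnm : n = m + k := by omega
      have e1 : PowerSeries.coeff n (p ^ k) = PowerSeries.coeff m (expComp p ^ k) := by
        conv_lhs => rw [h]
        rw [mul_pow, hnm, PowerSeries.coeff_X_pow_mul]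
      rw [e1, coeff_E_pow p h0]
      rw [Finset.sum_range_succ']
      have hterm0 : (k : ℚ) ^ 0 * PowerSeries.coeff m (p ^ 0) / (0)! = PowerSeries.coeff m 1 := by
        simp
      by_cases hm0 : m = 0
      · have hnk : n = k := by omega
        rw [hm0]
        simp only [Finset.range_zero, Finset.sum_empty, zero_add]
        simp [hnk, hm0]
      · have hm1 : 1 ≤ m := by omega
        have hmn : m < n := by omega
        have hz : (k : ℚ) ^ 0 * PowerSeries.coeff m (p ^ 0) / (Nat.factorial 0) = 0 := by
          simp [PowerSeries.coeff_one, hm0]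
        rw [hz, add_zero]
        have hmQ : (m : ℚ) ≠ 0 := Nat.cast_ne_zero.mpr hm0
        have hmfQ : ((m)! : ℚ) ≠ 0 := Nat.cast_ne_zero.mpr (Nat.factorial_ne_zero m)
        have hsum : ∑ i ∈ Finset.range m,
            (k : ℚ) ^ (i + 1) * PowerSeries.coeff m (p ^ (i + 1)) / (i + 1)! =
            (∑ i ∈ Finset.range m, ((i : ℚ) + 1) * (m.choose (i + 1)) * (k : ℚ) ^ (i + 1) *
              (m : ℚ) ^ (m - (i + 1))) / ((m : ℚ) * (m)!) := by
          rw [Finset.sum_div]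
          refine Finset.sum_congr rfl fun i hi => ?_
          have hi1 : i + 1 ≤ m := Finset.mem_range.mp hi
          have hIH := IH m hmn (i + 1) (by omega) hi1
          have hc : PowerSeries.coeff m (p ^ (i + 1)) =
              ((i : ℚ) + 1) * (m : ℚ) ^ (m - (i + 1)) / (m - (i + 1))! / m := by
            field_simp at hIH ⊢
            push_cast at hIH ⊢
            linarith [hIH]
          rw [hc, Nat.cast_choose ℚ hi1]
          have hf1 : ((i + 1)! : ℚ) ≠ 0 := Nat.cast_ne_zero.mpr (Nat.factorial_ne_zero _)
          have hf2 : (((m - (i + 1)))! : ℚ) ≠ 0 := Nat.cast_ne_zero.mpr (Nat.factorial_ne_zero _)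
          field_simp
        rw [hsum, binom_id m k hm1]
        have hnQ : (n : ℚ) = (k : ℚ) + (m : ℚ) := by
          rw [hnm]; push_cast; ring
        have hpow : ((k : ℚ) + (m : ℚ)) ^ (m - 1) * ((k : ℚ) + (m : ℚ)) = ((k : ℚ) + (m : ℚ)) ^ m := by
          rw [← pow_succ, show m - 1 + 1 = m by omega]
        rw [hnQ]
        rw [← hpow]
        field_simp
  have hk := key n 1 le_rfl hn
  rw [pow_one] at hk
  have hnQ : (n : ℚ) ≠ 0 := Nat.cast_ne_zero.mpr (by omega)
  have hfac : ((n)! : ℚ) = (n : ℚ) * ((n - 1)! : ℚ) := by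
    have := Nat.mul_factorial_pred (show n ≠ 0 by omega)
    exact_mod_cast (congrArg (Nat.cast : ℕ → ℚ) this).symm
  rw [hfac]
  have h1f : (((n-1))! : ℚ) ≠ 0 := Nat.cast_ne_zero.mpr (Nat.factorial_ne_zero _)
  field_simp at hk ⊢
  push_cast at hk
  linarith [hk]
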